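/- arXiv:1904.11958 — 2 statements merged into one kernel-verified Lean document; each statement's English description precedes it below -/
import Mathlib

section
/- Let N ∈ ℕ, z ∈ ℂ, and let t ∈ ℂ satisfy t ≠ x and t + 1 ≠ x for every natural number x ≤ N. Then the Stieltjes transform S(t) = ∑_{x=0}^N (−N)_x·(z^x/x!)·1/(t − x) of the Krawtchouk weight satisfies (t + 1)·S(t + 1) − z·(t − N)·S(t) = (1 − z)^{N+1}. -/
open Finset

/-- The Pochhammer symbol `(c)_n = ∏_{j=0}^{n-1} (c + j)`. -/
noncomputable def poch (c : ℂ) (n : ℕ) : ℂ := ∏ j ∈ Finset.range n, (c + (j : ℂ))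

lemma poch_succ (c : ℂ) (n : ℕ) : poch c (n + 1) = poch c n * (c + n) :=
  Finset.prod_range_succ _ _

lemma poch_neg_nat (N x : ℕ) (h : x ≤ N) :
    poch (-(N : ℂ)) x = (-1) ^ x * x.factorial * N.choose x := by
  induction x with
  | zero => simp [poch]
  | succ n ih =>
    have hn : n ≤ N := Nat.le_of_succ_le h
    rw [poch_succ, ih hn]
    have hsub : -(N : ℂ) + n = -((N - n : ℕ) : ℂ) := by
      rw [Nat.cast_sub hn]; ring
    rw [hsub]
    have hch : (N.choose (n + 1) : ℂ) * (n + 1) = N.choose n * ((N - n : ℕ) : ℂ) := by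
      exact_mod_cast Nat.choose_succ_right_eq N n
    have hfac : ((n + 1).factorial : ℂ) = n.factorial * (n + 1) := by
      rw [Nat.factorial_succ]; push_cast; ring
    rw [hfac]
    calc (-1) ^ n * (n.factorial : ℂ) * N.choose n * -((N - n : ℕ) : ℂ)
        = (-1) ^ (n + 1) * n.factorial * ((N.choose n : ℂ) * ((N - n : ℕ) : ℂ)) := by ring
      _ = (-1) ^ (n + 1) * n.factorial * ((N.choose (n + 1) : ℂ) * (n + 1)) := by rw [hch]
      _ = (-1) ^ (n + 1) * ((n.factorial : ℂ) * (n + 1)) * N.choose (n + 1) := by ring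

lemma krawtchouk_moment (N : ℕ) (z : ℂ) :
    ∑ x ∈ Finset.range (N + 1), poch (-(N : ℂ)) x * (z ^ x / (x.factorial : ℂ))
      = (1 - z) ^ N := by
  have : ∀ x ∈ Finset.range (N + 1),
      poch (-(N : ℂ)) x * (z ^ x / (x.factorial : ℂ))
        = (-z) ^ x * 1 ^ (N - x) * (N.choose x : ℂ) := by
    intro x hx
    have hx' : x ≤ N := Nat.lt_succ_iff.mp (Finset.mem_range.mp hx)
    rw [poch_neg_nat N x hx']
    have hfac : (x.factorial : ℂ) ≠ 0 := by
      exact_mod_cast Nat.factorial_ne_zero x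
    field_simp
    ring
  rw [Finset.sum_congr rfl this, ← add_pow]
  ring_nf

/-- the Stieltjes transform `S(t) = ∑_{x=0}^N (-N)_x (z^x/x!)/(t-x)` of the
Krawtchouk weight satisfies `(t+1) S(t+1) - z (t-N) S(t) = (1-z)^{N+1}`. -/
theorem krawtchouk_stieltjes (N : ℕ) (z t : ℂ)
    (ht : ∀ x : ℕ, x ≤ N → t ≠ (x : ℂ)) (ht1 : ∀ x : ℕ, x ≤ N → t + 1 ≠ (x : ℂ)) :
    (t + 1) * (∑ x ∈ Finset.range (N + 1),
        poch (-(N : ℂ)) x * (z ^ x / (x.factorial : ℂ)) * (1 / (t + 1 - (x : ℂ))))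
      - z * (t - (N : ℂ)) * (∑ x ∈ Finset.range (N + 1),
        poch (-(N : ℂ)) x * (z ^ x / (x.factorial : ℂ)) * (1 / (t - (x : ℂ))))
      = (1 - z) ^ (N + 1) := by
  have h0 : ∀ x : ℕ, x ≤ N → t - (x : ℂ) ≠ 0 := fun x hx => sub_ne_zero.mpr (ht x hx)
  have h1 : ∀ x : ℕ, x ≤ N → t + 1 - (x : ℂ) ≠ 0 := fun x hx => sub_ne_zero.mpr (ht1 x hx)
  set f : ℕ → ℂ := fun x => poch (-(N : ℂ)) x * (z ^ x / (x.factorial : ℂ)) with hf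
  have step1 : (t + 1) * (∑ x ∈ Finset.range (N + 1), f x * (1 / (t + 1 - (x : ℂ))))
      = (∑ x ∈ Finset.range (N + 1), f x)
        + ∑ x ∈ Finset.range (N + 1), f x * x * (1 / (t + 1 - (x : ℂ))) := by
    rw [Finset.mul_sum, ← Finset.sum_add_distrib]
    refine Finset.sum_congr rfl fun x hx => ?_
    have hne := h1 x (Nat.lt_succ_iff.mp (Finset.mem_range.mp hx))
    field_simp
    ring
  have step2 : z * (t - (N : ℂ)) * (∑ x ∈ Finset.range (N + 1), f x * (1 / (t - (x : ℂ))))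
      = z * (∑ x ∈ Finset.range (N + 1), f x)
        + ∑ x ∈ Finset.range (N + 1), f x * z * ((x : ℂ) - N) * (1 / (t - (x : ℂ))) := by
    rw [Finset.mul_sum, Finset.mul_sum, ← Finset.sum_add_distrib]
    refine Finset.sum_congr rfl fun x hx => ?_
    have hne := h0 x (Nat.lt_succ_iff.mp (Finset.mem_range.mp hx))
    field_simp
    ring
  have term : ∀ x : ℕ, f (x + 1) * ((x : ℂ) + 1) = f x * z * ((x : ℂ) - N) := by
    intro x
    simp only [hf]
    rw [poch_succ, Nat.factorial_succ]
    have hfac : (x.factorial : ℂ) ≠ 0 := by exact_mod_cast Nat.factorial_ne_zero x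
    have hx1 : ((x : ℂ) + 1) ≠ 0 := Nat.cast_add_one_ne_zero x
    push_cast
    field_simp
    ring
  have tele : (∑ x ∈ Finset.range (N + 1), f x * x * (1 / (t + 1 - (x : ℂ))))
      = ∑ x ∈ Finset.range (N + 1), f x * z * ((x : ℂ) - N) * (1 / (t - (x : ℂ))) := by
    rw [Finset.sum_range_succ' (fun x => f x * x * (1 / (t + 1 - (x : ℂ)))) N,
      Finset.sum_range_succ (fun x => f x * z * ((x : ℂ) - N) * (1 / (t - (x : ℂ)))) N]
    simp only [Nat.cast_zero, mul_zero, zero_mul, add_zero, sub_self]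
    refine Finset.sum_congr rfl fun x hx => ?_
    have h2 : t + 1 - ((x : ℂ) + 1) = t - x := by ring
    push_cast
    rw [h2, term x]
  rw [show (∑ x ∈ Finset.range (N + 1),
        poch (-(N : ℂ)) x * (z ^ x / (x.factorial : ℂ)) * (1 / (t + 1 - (x : ℂ))))
      = ∑ x ∈ Finset.range (N + 1), f x * (1 / (t + 1 - (x : ℂ))) from rfl,
    show (∑ x ∈ Finset.range (N + 1),
        poch (-(N : ℂ)) x * (z ^ x / (x.factorial : ℂ)) * (1 / (t - (x : ℂ))))
      = ∑ x ∈ Finset.range (N + 1), f x * (1 / (t - (x : ℂ))) from rfl,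
    step1, step2, tele]
  have hm : (∑ x ∈ Finset.range (N + 1), f x) = (1 - z) ^ N := krawtchouk_moment N z
  rw [hm]
  ring
end

section
/- Let z, ω ∈ ℂ and n ∈ ℕ. Then the n-th moment of the Christoffel-transformed Charlier weight satisfies ∑_{x=0}^∞ (x − ω)·φ_n(x)·z^x/x! = (n + z − ω)·z^n·e^z. -/
open Finset

/-- The falling factorial `φ_n(x) = ∏_{j=0}^{n-1} (x - j)`. -/
noncomputable def fallFac (n : ℕ) (x : ℂ) : ℂ := ∏ j ∈ Finset.range n, (x - (j : ℂ))

lemma fallFac_succ (n : ℕ) (x : ℂ) : fallFac (n + 1) x = fallFac n x * (x - n) := by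
  simp [fallFac, Finset.prod_range_succ]

lemma fallFac_nat_lt {n x : ℕ} (h : x < n) : fallFac n (x : ℂ) = 0 := by
  apply Finset.prod_eq_zero (Finset.mem_range.2 h)
  simp

lemma fallFac_shift (k n : ℕ) :
    fallFac n ((k + n : ℕ) : ℂ) * (k.factorial : ℂ) = ((k + n).factorial : ℂ) := by
  induction n generalizing k with
  | zero => simp [fallFac]
  | succ n ih =>
    have h1 : fallFac (n + 1) ((k + (n + 1) : ℕ) : ℂ)
        = fallFac n (((k + 1) + n : ℕ) : ℂ) * ((k : ℂ) + 1) := by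
      rw [fallFac_succ]
      have : ((k + (n + 1) : ℕ) : ℂ) = (((k + 1) + n : ℕ) : ℂ) := by push_cast; ring
      rw [this]
      push_cast; ring
    rw [h1]
    have := ih (k + 1)
    have hk : ((k + 1).factorial : ℂ) = ((k : ℂ) + 1) * (k.factorial : ℂ) := by
      push_cast [Nat.factorial_succ]; ring
    have hfin : (k + (n + 1)) = ((k + 1) + n) := by omega
    rw [hfin]
    calc fallFac n (((k + 1) + n : ℕ) : ℂ) * ((k : ℂ) + 1) * (k.factorial : ℂ)
        = fallFac n (((k + 1) + n : ℕ) : ℂ) * ((k + 1).factorial : ℂ) := by rw [hk]; ring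
      _ = (((k + 1) + n).factorial : ℂ) := ih (k + 1)

lemma hasSum_fallFac (z : ℂ) (n : ℕ) :
    HasSum (fun x : ℕ => fallFac n (x : ℂ) * z ^ x / (x.factorial : ℂ))
      (z ^ n * Complex.exp z) := by
  have base : HasSum (fun k : ℕ => z ^ n * (z ^ k / (k.factorial : ℂ)))
      (z ^ n * Complex.exp z) := by
    have := NormedSpace.expSeries_div_hasSum_exp z
    rw [Complex.exp_eq_exp_ℂ]
    exact this.mul_left _
  have key : ∀ k : ℕ, fallFac n ((k + n : ℕ) : ℂ) * z ^ (k + n) / ((k + n).factorial : ℂ)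
      = z ^ n * (z ^ k / (k.factorial : ℂ)) := by
    intro k
    have h := fallFac_shift k n
    have hne : ((k + n).factorial : ℂ) ≠ 0 := Nat.cast_ne_zero.2 (Nat.factorial_ne_zero _)
    have hne' : (k.factorial : ℂ) ≠ 0 := Nat.cast_ne_zero.2 (Nat.factorial_ne_zero _)
    field_simp
    rw [← h]
    push_cast
    ring
  have hinj : Function.Injective (fun k : ℕ => k + n) := add_left_injective n
  have hvan : ∀ x ∉ Set.range (fun k : ℕ => k + n),
      fallFac n (x : ℂ) * z ^ x / (x.factorial : ℂ) = 0 := by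
    intro x hx
    have hlt : x < n := by
      by_contra h
      exact hx ⟨x - n, by simpa using Nat.sub_add_cancel (not_lt.1 h)⟩
    rw [fallFac_nat_lt hlt]
    simp
  refine (hinj.hasSum_iff hvan).1 ?_
  have : ((fun x : ℕ => fallFac n (x : ℂ) * z ^ x / (x.factorial : ℂ)) ∘ fun k : ℕ => k + n)
      = fun k : ℕ => z ^ n * (z ^ k / (k.factorial : ℂ)) := funext fun k => key k
  rw [this]
  exact base

/-- the `n`-th moment of the Christoffel-transformed Charlier weight:
`∑_{x≥0} (x-ω) φ_n(x) z^x/x! = (n+z-ω) z^n e^z`. -/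
theorem christoffel_charlier_moment (z ω : ℂ) (n : ℕ) :
    (∑' x : ℕ, ((x : ℂ) - ω) * fallFac n (x : ℂ) * z ^ x / (x.factorial : ℂ))
      = ((n : ℂ) + z - ω) * z ^ n * Complex.exp z := by
  have h1 := hasSum_fallFac z (n + 1)
  have h2 := hasSum_fallFac z n
  have hsum : HasSum (fun x : ℕ => ((x : ℂ) - ω) * fallFac n (x : ℂ) * z ^ x / (x.factorial : ℂ))
      (z ^ (n + 1) * Complex.exp z + ((n : ℂ) - ω) * (z ^ n * Complex.exp z)) := by
    have := h1.add (h2.mul_left ((n : ℂ) - ω))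
    refine this.congr_fun fun x => ?_
    rw [fallFac_succ]
    field_simp
    ring
  rw [hsum.tsum_eq]
  ring
end
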